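/- If M is a matching in a finite simple graph G such that the subgraph G(M) of G induced by the set of vertices incident with an edge of M is a forest, then M is the unique perfect matching of G(M); in other words, every acyclic matching is a uniquely restricted matching. -/

import Mathlib

open SimpleGraph

lemma key_acyclic_involutions {W : Type*} [Finite W] (H : SimpleGraph W)
    (hac : H.IsAcyclic) (f g : W → W)
    (hf : ∀ x, H.Adj x (f x)) (hg : ∀ x, H.Adj x (g x))
    (hf2 : ∀ x, f (f x) = x) (hg2 : ∀ x, g (g x) = x)
    (v : W) (hv : f v ≠ g v) : False := by
  classical
  -- the alternating sequence
  set x : ℕ → W := fun n => Nat.rec v (fun n xn => if Even n then g xn else f xn) n with hx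
  have hx0 : x 0 = v := rfl
  have hxs : ∀ n, x (n + 1) = if Even n then g (x n) else f (x n) := fun n => rfl
  -- the invariant: f and g differ along the whole sequence
  have hneq : ∀ n, f (x n) ≠ g (x n) := by
    intro n
    induction n with
    | zero => exact hv
    | succ n ih =>
      rw [hxs n]
      by_cases hpar : Even n
      · rw [if_pos hpar]
        intro h
        rw [hg2] at h
        apply ih
        have := congrArg f h
        rw [hf2] at this
        exact this.symm
      · rw [if_neg hpar]
        intro h
        rw [hf2] at h
        apply ih
        have := congrArg g h
        rw [hg2] at this
        exact this.symm
  -- adjacency along the sequence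
  have hadj : ∀ n, H.Adj (x n) (x (n + 1)) := by
    intro n
    rw [hxs n]
    by_cases hpar : Even n
    · rw [if_pos hpar]; exact hg (x n)
    · rw [if_neg hpar]; exact hf (x n)
  -- non-backtracking
  have hnb : ∀ n, x (n + 2) ≠ x n := by
    intro n
    rw [hxs (n+1), hxs n]
    by_cases hpar : Even n
    · have hpar1 : ¬ Even (n + 1) := by simp [Nat.even_add_one, hpar]
      rw [if_pos hpar, if_neg hpar1]
      intro h
      apply hneq n
      have := congrArg f h
      rw [hf2] at this
      exact this.symm
    · have hpar1 : Even (n + 1) := Nat.even_add_one.mpr hpar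
      rw [if_neg hpar, if_pos hpar1]
      intro h
      apply hneq n
      have := congrArg g h
      rw [hg2] at this
      exact this
  -- the walk back to v
  let w : (n : ℕ) → H.Walk (x n) v :=
    fun n => Nat.rec Walk.nil (fun n p => Walk.cons (hadj n).symm p) n
  have hw0 : w 0 = Walk.nil := rfl
  have hws : ∀ n, w (n + 1) = Walk.cons (hadj n).symm (w n) := fun n => rfl
  -- membership in support
  have hmem : ∀ n k, k ≤ n → x k ∈ (w n).support := by
    intro n
    induction n with
    | zero => intro k hk; interval_cases k; simp [hw0]
    | succ n ih =>
      intro k hk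
      rw [hws n, Walk.support_cons]
      rcases Nat.lt_or_ge k (n+1) with h | h
      · exact List.mem_cons_of_mem _ (ih k (Nat.lt_succ_iff.mp h))
      · have : k = n + 1 := le_antisymm hk h
        subst this; exact List.mem_cons_self
  -- support characterization
  have hsup : ∀ n y, y ∈ (w n).support → ∃ k, k ≤ n ∧ y = x k := by
    intro n
    induction n with
    | zero => intro y hy; rw [hw0] at hy; simp at hy; exact ⟨0, le_rfl, hy⟩
    | succ n ih =>
      intro y hy
      rw [hws n, Walk.support_cons] at hy
      rcases List.mem_cons.mp hy with h | h
      · exact ⟨n + 1, le_rfl, h⟩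
      · obtain ⟨k, hk, hke⟩ := ih y h
        exact ⟨k, Nat.le_succ_of_le hk, hke⟩
  -- edges of the walk
  have hedge : ∀ n e, e ∈ (w n).edges → ∃ j, j < n ∧ e = s(x (j+1), x j) := by
    intro n
    induction n with
    | zero => intro e he; rw [hw0] at he; simp at he
    | succ n ih =>
      intro e he
      rw [hws n, Walk.edges_cons] at he
      rcases List.mem_cons.mp he with h | h
      · refine ⟨n, Nat.lt_succ_self n, ?_⟩
        rw [h, Sym2.eq_swap]
      · obtain ⟨j, hj, hje⟩ := ih e h
        exact ⟨j, Nat.lt_succ_of_lt hj, hje⟩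
  -- all the walks are paths
  have hpath : ∀ n, ∀ m ≤ n, (w m).IsPath := by
    intro n
    induction n with
    | zero => intro m hm; interval_cases m; rw [hw0]; exact Walk.IsPath.nil
    | succ n ih =>
      -- injectivity up to n
      have hinj : ∀ a b, a ≤ n → b ≤ n → x a = x b → a = b := by
        have base : ∀ a b, a < b → b ≤ n → x a = x b → False := by
          intro a b hab hbn hxab
          obtain ⟨c, rfl⟩ : ∃ c, b = c + 1 := ⟨b - 1, by omega⟩
          have hpb := ih (c+1) hbn
          rw [hws c, Walk.cons_isPath_iff] at hpb
          exact hpb.2 (hxab ▸ hmem c a (by omega))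
        intro a b han hbn hxab
        rcases lt_trichotomy a b with h | h | h
        · exact absurd (base a b h hbn hxab) (by simp)
        · exact h
        · exact absurd (base b a h han hxab.symm) (by simp)
      intro m hm
      rcases Nat.lt_or_ge m (n+1) with h | h
      · exact ih m (Nat.lt_succ_iff.mp h)
      have hmeq : m = n + 1 := le_antisymm hm h
      subst hmeq
      rw [hws n, Walk.cons_isPath_iff]
      refine ⟨ih n le_rfl, ?_⟩
      intro hcon
      obtain ⟨k, hk, hke⟩ := hsup n _ hcon
      -- case k = n : contradicts adjacency
      rcases Nat.lt_or_ge k n with hkn | hkn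
      swap
      · have : k = n := le_antisymm hk hkn
        subst this
        exact (hadj k).ne' hke
      -- case k = n - 1 : contradicts non-backtracking
      rcases Nat.lt_or_ge k (n-1) with hkn1 | hkn1
      swap
      · have : k + 1 = n := by omega
        apply hnb k
        rw [show k + 2 = n + 1 by omega]
        exact hke
      -- main case : k + 2 ≤ n, get two distinct paths
      have hk2 : k + 2 ≤ n := by omega
      have hkm : x k ∈ (w n).support := hmem n k (by omega)
      have hadj' : H.Adj (x n) (x k) := hke ▸ hadj n
      set P1 : H.Walk (x n) (x k) := (w n).takeUntil (x k) hkm with hP1def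
      have hP1 : P1.IsPath := (ih n le_rfl).takeUntil hkm
      set P2 : H.Walk (x n) (x k) := Walk.cons hadj' Walk.nil with hP2def
      have hP2 : P2.IsPath := by
        rw [hP2def, Walk.cons_isPath_iff]
        refine ⟨Walk.IsPath.nil, ?_⟩
        simp [hadj'.ne]
      have hPeq : P1 = P2 := by
        have := hac.path_unique ⟨P1, hP1⟩ ⟨P2, hP2⟩
        exact congrArg Subtype.val this
      have hE : s(x n, x k) ∈ (w n).edges := by
        apply Walk.edges_takeUntil_subset (w n) hkm
        rw [← hP1def, hPeq, hP2def]
        simp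
      obtain ⟨j, hj, hje⟩ := hedge n _ hE
      rw [Sym2.eq_iff] at hje
      rcases hje with ⟨h1, h2⟩ | ⟨h1, h2⟩
      · have hn' : n = j + 1 := hinj n (j+1) le_rfl (by omega) h1
        have hk' : k = j := hinj k j (by omega) (by omega) h2
        omega
      · have : n = j := hinj n j le_rfl (by omega) h1
        omega
  -- an injective map ℕ → W contradicts finiteness
  obtain ⟨a, b, hab, heq⟩ := Finite.exists_ne_map_eq_of_infinite x
  have main : ∀ a b, a < b → x a = x b → False := by
    intro a b hab hxab
    obtain ⟨c, rfl⟩ : ∃ c, b = c + 1 := ⟨b - 1, by omega⟩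
    have hpb := hpath (c+1) (c+1) le_rfl
    rw [hws c, Walk.cons_isPath_iff] at hpb
    exact hpb.2 (hxab ▸ hmem c a (by omega))
  rcases lt_or_gt_of_ne hab with h | h
  · exact main a b h heq
  · exact main b a h heq.symm

/-- If `M` is a matching in a finite simple graph `G` such that the
subgraph `G(M)` of `G` induced by the vertex set `M.verts` of `M` is a forest (acyclic),
then `M` is the unique perfect matching of `G(M)`: any matching `M'` of `G` whose vertex
set is exactly `M.verts` (i.e. any perfect matching of `G(M)`) coincides with `M`.
In other words, every acyclic matching is uniquely restricted. -/
theorem acyclic_matching_is_uniquely_restricted {V : Type*} [Fintype V]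
    (G : SimpleGraph V) (M : G.Subgraph) (hM : M.IsMatching)
    (hac : (G.induce M.verts).IsAcyclic) :
    ∀ M' : G.Subgraph, M'.IsMatching → M'.verts = M.verts → M' = M := by
  intro M' hM' hverts
  classical
  have hmem' : ∀ {a : V}, a ∈ M.verts → a ∈ M'.verts := fun h => by rw [hverts]; exact h
  have hmem2 : ∀ {a : V}, a ∈ M'.verts → a ∈ M.verts := fun h => by rw [← hverts]; exact h
  -- partner functions
  let f : M.verts → M.verts := fun x =>
    ⟨(hM x.2).choose, M.edge_vert (hM x.2).choose_spec.1.symm⟩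
  let g : M.verts → M.verts := fun x =>
    ⟨(hM' (hmem' x.2)).choose, hmem2 (M'.edge_vert (hM' (hmem' x.2)).choose_spec.1.symm)⟩
  have hfM : ∀ x : M.verts, M.Adj x (f x) := fun x => (hM x.2).choose_spec.1
  have hgM : ∀ x : M.verts, M'.Adj x (g x) := fun x => (hM' (hmem' x.2)).choose_spec.1
  have hfu : ∀ (v w : V) (hv : v ∈ M.verts), M.Adj v w → ((f ⟨v, hv⟩ : M.verts) : V) = w :=
    fun v w hv h => ((hM hv).choose_spec.2 w h).symm
  have hgu : ∀ (v w : V) (hv : v ∈ M.verts), M'.Adj v w → ((g ⟨v, hv⟩ : M.verts) : V) = w :=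
    fun v w hv h => ((hM' (hmem' hv)).choose_spec.2 w h).symm
  have hf2 : ∀ x, f (f x) = x := fun x =>
    Subtype.ext (hfu (f x) x (f x).2 (hfM x).symm)
  have hg2 : ∀ x, g (g x) = x := fun x =>
    Subtype.ext (hgu (g x) x (g x).2 (hgM x).symm)
  have hfadj : ∀ x, (G.induce M.verts).Adj x (f x) := by
    intro x
    simp only [comap_adj, Function.Embedding.coe_subtype]
    exact M.adj_sub (hfM x)
  have hgadj : ∀ x, (G.induce M.verts).Adj x (g x) := by
    intro x
    simp only [comap_adj, Function.Embedding.coe_subtype]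
    exact M'.adj_sub (hgM x)
  have hfg : ∀ x, f x = g x := by
    by_contra hc
    push_neg at hc
    obtain ⟨v, hv⟩ := hc
    exact key_acyclic_involutions (G.induce M.verts) hac f g hfadj hgadj hf2 hg2 v hv
  apply SimpleGraph.Subgraph.ext hverts
  funext v w
  apply propext
  constructor
  · intro h
    have hv : v ∈ M.verts := hverts ▸ M'.edge_vert h
    have h1 : ((g ⟨v, hv⟩ : M.verts) : V) = w := hgu v w hv h
    have h2 : ((f ⟨v, hv⟩ : M.verts) : V) = w := by rw [hfg ⟨v, hv⟩]; exact h1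
    exact h2 ▸ hfM ⟨v, hv⟩
  · intro h
    have hv : v ∈ M.verts := M.edge_vert h
    have h1 : ((f ⟨v, hv⟩ : M.verts) : V) = w := hfu v w hv h
    have h2 : ((g ⟨v, hv⟩ : M.verts) : V) = w := by rw [← hfg ⟨v, hv⟩]; exact h1
    exact h2 ▸ hgM ⟨v, hv⟩
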